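/- Let μ > 0 and ν > −3/2 with μ + ν + 1 > 0. Then there exists a constant C > 0 such that for all t > 1, |Q^μ_ν(t)| ≤ C (t²−1)^{−μ/2} t^{−(ν−μ+1)}. -/

import Mathlib

open MeasureTheory Real Set Filter Topology

/-- Gauss hypergeometric function ₂F₁(a,b;c;s) as a power series. -/
noncomputable def hyp2F1 (a b c s : ℝ) : ℝ :=
  ∑' n : ℕ, ((∏ i ∈ Finset.range n, (a + i)) * (∏ i ∈ Finset.range n, (b + i)) /
    ((∏ i ∈ Finset.range n, (c + i)) * n.factorial)) * s ^ n

/-- Associated Legendre function of the first kind, for -1 < t < 1. -/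
noncomputable def legendreP (μ ν t : ℝ) : ℝ :=
  (1 / Real.Gamma (1 - μ)) * ((1 + t) / (1 - t)) ^ (μ / 2) *
    hyp2F1 (ν + 1) (-ν) (1 - μ) ((1 - t) / 2)

/-- The real factor of the associated Legendre function of the second kind (t > 1),
i.e. `Q^μ_ν(t)` without its phase `e^{iπμ}`. -/
noncomputable def legendreQreal (μ ν t : ℝ) : ℝ :=
  Real.sqrt Real.pi * Real.Gamma (μ + ν + 1) * (t ^ 2 - 1) ^ (μ / 2) /
    ((2 : ℝ) ^ (ν + 1) * t ^ (μ + ν + 1) * Real.Gamma (ν + 3 / 2)) *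
    hyp2F1 ((μ + ν) / 2 + 1) ((μ + ν + 1) / 2) (ν + 3 / 2) (1 / t ^ 2)

/-- Associated Legendre function of the second kind, for t > 1. -/
noncomputable def legendreQ (μ ν t : ℝ) : ℂ :=
  Complex.exp ((Real.pi * μ : ℝ) * Complex.I) * (legendreQreal μ ν t : ℝ)

/-- Macdonald's integral `R_{μ,ν}(x,y,z)` of three Bessel functions, for x, y, z > 0. -/
noncomputable def Rmn (μ ν x y z : ℝ) : ℝ :=
  if z < |x - y| then 0
  else if z < x + y then
    (x * y) ^ (μ - 1) *
      Real.sqrt (1 - ((x ^ 2 + y ^ 2 - z ^ 2) / (2 * x * y)) ^ 2) ^ (μ - 1 / 2) *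
      legendreP (1 / 2 - μ) (ν - 1 / 2) ((x ^ 2 + y ^ 2 - z ^ 2) / (2 * x * y)) /
      (Real.sqrt (2 * Real.pi) * z ^ μ)
  else
    Real.sin ((ν - μ) * Real.pi) * (x * y) ^ (μ - 1) *
      Real.sqrt (((z ^ 2 - x ^ 2 - y ^ 2) / (2 * x * y)) ^ 2 - 1) ^ (μ - 1 / 2) *
      legendreQreal (1 / 2 - μ) (ν - 1 / 2) ((z ^ 2 - x ^ 2 - y ^ 2) / (2 * x * y)) /
      (Real.sqrt (Real.pi ^ 3 / 2) * z ^ μ)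

/-- Normalized Bessel function 𝒥_ν. -/
noncomputable def normBessel (ν w : ℝ) : ℝ :=
  Real.Gamma (ν + 1) *
    ∑' n : ℕ, (-1 : ℝ) ^ n * (w / 2) ^ (2 * n) / (n.factorial * Real.Gamma (ν + n + 1))

/-- Bessel function of the first kind J_ν. -/
noncomputable def besselJ (ν w : ℝ) : ℝ :=
  (w / 2) ^ ν *
    ∑' n : ℕ, (-1 : ℝ) ^ n * (w / 2) ^ (2 * n) / (n.factorial * Real.Gamma (ν + n + 1))

/-- The constant m_{k,a}. -/
noncomputable def mka (k a : ℝ) : ℂ :=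
  Complex.exp ((-(Real.pi / a) : ℝ) * Complex.I) *
    ((Real.Gamma ((2 * k + a - 1) / a) /
      (a ^ ((2 : ℝ) / a) * Real.Gamma ((2 * k + a + 1) / a)) : ℝ) : ℂ)

/-- The one-dimensional (k,a)-generalized Fourier kernel B_{k,a}(λ,x). -/
noncomputable def Bka (k a lam x : ℝ) : ℂ :=
  ((normBessel ((2 * k - 1) / a) ((2 / a) * |lam * x| ^ (a / 2)) : ℝ) : ℂ) +
    mka k a * ((lam * x : ℝ) : ℂ) *
      ((normBessel ((2 * k + 1) / a) ((2 / a) * |lam * x| ^ (a / 2)) : ℝ) : ℂ)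

/-- The kernel Δ_{k,a}(x,y,z) of the product formula. -/
noncomputable def DeltaKA (k a x y z : ℝ) : ℂ :=
  ((a * (2 : ℝ) ^ ((2 * k - 1) / a - 2) * Real.Gamma ((2 * k - 1) / a + 1) *
      |x * y * z| ^ ((1 : ℝ) / 2 - k) : ℝ) : ℂ) *
  (((Rmn ((2 * k - 1) / a) ((2 * k - 1) / a) (|x| ^ (a / 2)) (|y| ^ (a / 2)) (|z| ^ (a / 2)) : ℝ) : ℂ) +
    Complex.exp ((-(2 * Real.pi / a) : ℝ) * Complex.I) * ((Real.sign (x * y) : ℝ) : ℂ) *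
      ((Rmn ((2 * k - 1) / a) ((2 * k + 1) / a) (|x| ^ (a / 2)) (|y| ^ (a / 2)) (|z| ^ (a / 2)) : ℝ) : ℂ) +
    ((Real.sign (x * z) : ℝ) : ℂ) *
      ((Rmn ((2 * k - 1) / a) ((2 * k + 1) / a) (|x| ^ (a / 2)) (|z| ^ (a / 2)) (|y| ^ (a / 2)) : ℝ) : ℂ) +
    ((Real.sign (y * z) : ℝ) : ℂ) *
      ((Rmn ((2 * k - 1) / a) ((2 * k + 1) / a) (|y| ^ (a / 2)) (|z| ^ (a / 2)) (|x| ^ (a / 2)) : ℝ) : ℂ))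

/-- The weighted measure |x|^{2k+a-2} dx on ℝ. -/
noncomputable def wMeasure (k a : ℝ) : Measure ℝ :=
  volume.withDensity fun x => ENNReal.ofReal (|x| ^ (2 * k + a - 2))

/-- Gegenbauer polynomial C_n^μ. -/
noncomputable def gegenbauer (μ : ℝ) (n : ℕ) (x : ℝ) : ℝ :=
  ∑ j ∈ Finset.range (n / 2 + 1),
    (-1 : ℝ) ^ j * Real.Gamma ((n : ℝ) - j + μ) /
      (Real.Gamma μ * j.factorial * (n - 2 * j).factorial) * (2 * x) ^ (n - 2 * j)
section statement17aux

open Real Set MeasureTheory Finset in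
private lemma st17_sum_inv_sq' (n : ℕ) :
    ∑ k ∈ Finset.range (n+1), (1:ℝ)/((k:ℝ)+1)^2 ≤ 2 - 1/((n:ℝ)+1) := by
  induction n with
  | zero => norm_num
  | succ n ih =>
    rw [Finset.sum_range_succ]
    have h1 : (0:ℝ) < (n:ℝ)+1 := by positivity
    have h2 : (0:ℝ) < (n:ℝ)+2 := by positivity
    have key : (1:ℝ)/((↑(n+1):ℝ)+1)^2 ≤ 1/((n:ℝ)+1) - 1/((n:ℝ)+2) := by
      push_cast
      rw [div_sub_div _ _ (ne_of_gt h1) (ne_of_gt h2),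
        div_le_div_iff₀ (by positivity) (by positivity)]
      nlinarith
    push_cast at key ih ⊢
    have e : (n:ℝ)+1+1 = (n:ℝ)+2 := by ring
    rw [e] at key ⊢
    linarith

open Real Set MeasureTheory Finset in
private lemma st17_sum_inv_sq (n : ℕ) : ∑ k ∈ Finset.range n, (1:ℝ)/((k:ℝ)+1)^2 ≤ 2 := by
  cases n with
  | zero => norm_num
  | succ m =>
    have h1 : (0:ℝ) < (m:ℝ)+1 := by positivity
    have h2 : (0:ℝ) < 1/((m:ℝ)+1) := by positivity
    linarith [st17_sum_inv_sq' m]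

open Real Set MeasureTheory Finset in
private lemma st17_gamma_prod (x : ℝ) (hx : 0 < x) (n : ℕ) :
    Real.Gamma (x + n) = Real.Gamma x * ∏ i ∈ Finset.range n, (x + i) := by
  induction n with
  | zero => simp
  | succ n ih =>
    have h : x + (n:ℝ) ≠ 0 := by positivity
    have e : (x + (↑(n+1):ℝ)) = (x + n) + 1 := by push_cast; ring
    rw [e, Real.Gamma_add_one h, ih, Finset.prod_range_succ]
    ring

open Real Set MeasureTheory Finset in
private lemma st17_poch_partial (μ : ℝ) (hμ : 0 < μ) (s : ℝ) (hs0 : 0 ≤ s) (hs1 : s < 1)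
    (N : ℕ) :
    ∑ n ∈ Finset.range N, (∏ i ∈ Finset.range n, (μ + i)) / (n.factorial : ℝ) * s ^ n
      ≤ (1 - s) ^ (-μ) := by
  have hΓ : 0 < Real.Gamma μ := Real.Gamma_pos_of_pos hμ
  set f : ℕ → ℝ → ℝ := fun n x => Real.exp (-x) * x ^ (μ - 1) * ((s * x) ^ n / n.factorial)
    with hf
  have key : ∀ n : ℕ, (∏ i ∈ Finset.range n, (μ + i)) / (n.factorial : ℝ) * s ^ n
      = (1 / Real.Gamma μ) * ∫ x in Ioi (0:ℝ), f n x := by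
    intro n
    have hμn : (0:ℝ) < μ + n := by positivity
    have e1 : ∫ x in Ioi (0:ℝ), f n x
        = ∫ x in Ioi (0:ℝ), (s ^ n / n.factorial) * (Real.exp (-x) * x ^ (μ + n - 1)) := by
      refine setIntegral_congr_fun measurableSet_Ioi (fun x hx => ?_)
      have hx : (0:ℝ) < x := hx
      rw [hf]
      simp only
      rw [mul_pow, show (μ + (n:ℝ) - 1) = (μ - 1) + (n:ℝ) by ring,
        Real.rpow_add hx, Real.rpow_natCast]
      ring
    rw [e1, MeasureTheory.integral_const_mul]
    have e2 : ∫ x in Ioi (0:ℝ), Real.exp (-x) * x ^ (μ + (n:ℝ) - 1) = Real.Gamma (μ + n) :=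
      (Real.Gamma_eq_integral hμn).symm
    rw [e2, st17_gamma_prod μ hμ n]
    field_simp
  have integ : ∀ n ∈ Finset.range N, IntegrableOn (f n) (Ioi (0:ℝ)) := by
    intro n _
    have hμn : (0:ℝ) < μ + n := by positivity
    have base : IntegrableOn
        (fun x : ℝ => (s ^ n / (n.factorial:ℝ)) * (Real.exp (-x) * x ^ (μ + (n:ℝ) - 1)))
        (Ioi 0) := (Real.GammaIntegral_convergent hμn).const_mul (s ^ n / n.factorial)
    refine base.congr_fun (fun x hx => ?_) measurableSet_Ioi
    have hx : (0:ℝ) < x := hx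
    rw [hf]
    simp only
    rw [mul_pow, show (μ + (n:ℝ) - 1) = (μ - 1) + (n:ℝ) by ring,
      Real.rpow_add hx, Real.rpow_natCast]
    ring
  have hb : (0:ℝ) < 1 - s := by linarith
  have hRint : IntegrableOn (fun x : ℝ => x ^ (μ - 1) * Real.exp (-(1 - s) * x)) (Ioi 0) := by
    have := integrableOn_rpow_mul_exp_neg_mul_rpow (p := 1) (s := μ - 1) (b := 1 - s)
      (by linarith) one_pos hb
    simpa using this
  have eval : ∫ x in Ioi (0:ℝ), x ^ (μ - 1) * Real.exp (-(1 - s) * x)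
      = (1 - s) ^ (-μ) * Real.Gamma μ := by
    have := integral_rpow_mul_exp_neg_mul_rpow (p := 1) (q := μ - 1) (b := 1 - s)
      one_pos (by linarith) hb
    simp only [Real.rpow_one] at this
    rw [this, show -(μ - 1 + 1) / 1 = -μ by ring, show (μ - 1 + 1) / 1 = μ by ring]
    ring
  calc
    ∑ n ∈ Finset.range N, (∏ i ∈ Finset.range n, (μ + i)) / (n.factorial : ℝ) * s ^ n
        = (1 / Real.Gamma μ) * ∑ n ∈ Finset.range N, ∫ x in Ioi (0:ℝ), f n x := by
          rw [Finset.mul_sum]; exact Finset.sum_congr rfl (fun n _ => key n)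
    _ = (1 / Real.Gamma μ) * ∫ x in Ioi (0:ℝ), ∑ n ∈ Finset.range N, f n x := by
          rw [MeasureTheory.integral_finset_sum _ integ]
    _ ≤ (1 / Real.Gamma μ) * ∫ x in Ioi (0:ℝ), x ^ (μ - 1) * Real.exp (-(1 - s) * x) := by
          refine mul_le_mul_of_nonneg_left ?_ (by positivity)
          refine setIntegral_mono_on (MeasureTheory.integrable_finset_sum _ integ) hRint
            measurableSet_Ioi (fun x hx => ?_)
          have hx : (0:ℝ) < x := hx
          have h1 : ∑ n ∈ Finset.range N, f n x
              = Real.exp (-x) * x ^ (μ - 1) * ∑ n ∈ Finset.range N, (s * x) ^ n / n.factorial := by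
            rw [Finset.mul_sum]
          rw [h1]
          have h2 : ∑ n ∈ Finset.range N, (s * x) ^ n / n.factorial ≤ Real.exp (s * x) :=
            Real.sum_le_exp_of_nonneg (by positivity) N
          have h3 : Real.exp (-x) * x ^ (μ - 1) * Real.exp (s * x)
              = x ^ (μ - 1) * Real.exp (-(1 - s) * x) := by
            rw [mul_comm (Real.exp (-x)), mul_assoc, ← Real.exp_add]
            ring_nf
          calc Real.exp (-x) * x ^ (μ - 1) * ∑ n ∈ Finset.range N, (s * x) ^ n / n.factorial
              ≤ Real.exp (-x) * x ^ (μ - 1) * Real.exp (s * x) := by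
                refine mul_le_mul_of_nonneg_left h2 (by positivity)
            _ = _ := h3
    _ = (1 - s) ^ (-μ) := by
          rw [eval]; field_simp

open Real Set MeasureTheory Finset in
private lemma st17_coef_compare (a b c : ℝ) (ha : 0 < a) (hb : 0 < b) (hc : 0 < c)
    (hm : 0 < a + b - c) (n : ℕ) :
    (∏ i ∈ Finset.range n, (a + i)) * (∏ i ∈ Finset.range n, (b + i))
      ≤ Real.exp (2 * (max (a * b - c * (a + b - c)) 0 / (min c 1 * min (a + b - c) 1)))
        * (∏ i ∈ Finset.range n, ((a + b - c) + i)) * (∏ i ∈ Finset.range n, (c + i)) := by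
  set μ := a + b - c with hμdef
  set E := max (a * b - c * μ) 0 / (min c 1 * min μ 1) with hE
  have hmin : 0 < min c 1 * min μ 1 := by positivity
  have hEnn : 0 ≤ E := div_nonneg (le_max_right _ _) hmin.le
  have hEmul : E * (min c 1 * min μ 1) = max (a * b - c * μ) 0 :=
    div_mul_cancel₀ _ hmin.ne'
  have step : ∀ n : ℕ,
      (∏ i ∈ Finset.range n, (a + i)) * (∏ i ∈ Finset.range n, (b + i))
        ≤ (∏ k ∈ Finset.range n, (1 + E / ((k:ℝ)+1)^2))
          * (∏ i ∈ Finset.range n, (μ + i)) * (∏ i ∈ Finset.range n, (c + i)) := by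
    intro n
    induction n with
    | zero => simp
    | succ n ih =>
      simp only [Finset.prod_range_succ]
      have hPw : 0 < ∏ k ∈ Finset.range n, (1 + E / ((k:ℝ)+1)^2) :=
        Finset.prod_pos (fun k _ => by positivity)
      have hc1 : min c 1 * ((n:ℝ)+1) ≤ c + n := by
        have hn : (0:ℝ) ≤ n := Nat.cast_nonneg n
        rcases le_total c 1 with h | h
        · rw [min_eq_left h]; nlinarith
        · rw [min_eq_right h]; nlinarith
      have hμ1 : min μ 1 * ((n:ℝ)+1) ≤ μ + n := by
        have hn : (0:ℝ) ≤ n := Nat.cast_nonneg n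
        rcases le_total μ 1 with h | h
        · rw [min_eq_left h]; nlinarith
        · rw [min_eq_right h]; nlinarith
      have hn1 : (0:ℝ) < ((n:ℝ)+1)^2 := by positivity
      have hcn : (0:ℝ) < c + n := by positivity
      have hμn : (0:ℝ) < μ + n := by positivity
      have key : (a + n) * (b + n) ≤ (1 + E / ((n:ℝ)+1)^2) * ((μ + n) * (c + n)) := by
        have h2 : (min c 1 * min μ 1) * ((n:ℝ)+1)^2 ≤ (μ + n) * (c + n) := by
          nlinarith [mul_le_mul hμ1 hc1 (by positivity) hμn.le]
        have h1 : E * (min c 1 * min μ 1) * ((n:ℝ)+1)^2 ≤ E * ((μ + n) * (c + n)) := by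
          nlinarith [h2, hEnn]
        have h6 : a * b - c * μ ≤ E * ((μ + n) * (c + n)) / ((n:ℝ)+1)^2 := by
          refine le_trans (le_max_left _ 0) ?_
          rw [← hEmul, le_div_iff₀ hn1]
          linarith
        have h4 : (a + (n:ℝ)) * (b + n) - (μ + n) * (c + n) = a * b - c * μ := by
          rw [hμdef]; ring
        have goal_eq : (1 + E / ((n:ℝ)+1)^2) * ((μ + n) * (c + n))
            = (μ + n) * (c + n) + E * ((μ + n) * (c + n)) / ((n:ℝ)+1)^2 := by ring
        rw [goal_eq]
        linarith
      calc (∏ i ∈ Finset.range n, (a + (i:ℝ))) * (a + n)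
            * ((∏ i ∈ Finset.range n, (b + (i:ℝ))) * (b + n))
          = ((∏ i ∈ Finset.range n, (a + (i:ℝ))) * (∏ i ∈ Finset.range n, (b + (i:ℝ))))
            * ((a + n) * (b + n)) := by ring
        _ ≤ ((∏ k ∈ Finset.range n, (1 + E / ((k:ℝ)+1)^2))
            * (∏ i ∈ Finset.range n, (μ + i)) * (∏ i ∈ Finset.range n, (c + i)))
            * ((1 + E / ((n:ℝ)+1)^2) * ((μ + n) * (c + n))) := by
            refine mul_le_mul ih key ?_ ?_
            · positivity
            · have hPμ : 0 < ∏ i ∈ Finset.range n, (μ + (i:ℝ)) :=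
                Finset.prod_pos (fun i _ => by positivity)
              have hPc : 0 < ∏ i ∈ Finset.range n, (c + (i:ℝ)) :=
                Finset.prod_pos (fun i _ => by positivity)
              positivity
        _ = (∏ k ∈ Finset.range n, (1 + E / ((k:ℝ)+1)^2)) * (1 + E / ((n:ℝ)+1)^2)
            * ((∏ i ∈ Finset.range n, (μ + i)) * (μ + n))
            * ((∏ i ∈ Finset.range n, (c + i)) * (c + n)) := by ring
  have wbound : (∏ k ∈ Finset.range n, (1 + E / ((k:ℝ)+1)^2)) ≤ Real.exp (2 * E) := by
    calc (∏ k ∈ Finset.range n, (1 + E / ((k:ℝ)+1)^2))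
        ≤ ∏ k ∈ Finset.range n, Real.exp (E / ((k:ℝ)+1)^2) := by
          refine Finset.prod_le_prod (fun k _ => by positivity) (fun k _ => ?_)
          have := Real.add_one_le_exp (E / ((k:ℝ)+1)^2)
          linarith
      _ = Real.exp (∑ k ∈ Finset.range n, E / ((k:ℝ)+1)^2) := (Real.exp_sum _ _).symm
      _ ≤ Real.exp (2 * E) := by
          refine Real.exp_le_exp.mpr ?_
          have he : ∑ k ∈ Finset.range n, E / ((k:ℝ)+1)^2
              = E * ∑ k ∈ Finset.range n, (1:ℝ)/((k:ℝ)+1)^2 := by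
            rw [Finset.mul_sum]; exact Finset.sum_congr rfl (fun k _ => by field_simp)
          rw [he]
          have := mul_le_mul_of_nonneg_left (st17_sum_inv_sq n) hEnn
          linarith
  have hPμ : 0 ≤ ∏ i ∈ Finset.range n, (μ + (i:ℝ)) :=
    (Finset.prod_pos (fun i _ => by positivity)).le
  have hPc : 0 ≤ ∏ i ∈ Finset.range n, (c + (i:ℝ)) :=
    (Finset.prod_pos (fun i _ => by positivity)).le
  refine le_trans (step n) ?_
  gcongr

open Real Set MeasureTheory Finset in
private lemma st17_hyp_bound (a b c : ℝ) (ha : 0 < a) (hb : 0 < b) (hc : 0 < c)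
    (hm : 0 < a + b - c) :
    ∃ K : ℝ, 0 < K ∧ ∀ s : ℝ, 0 ≤ s → s < 1 →
      hyp2F1 a b c s ≤ K * (1 - s) ^ (-(a + b - c)) := by
  set K := Real.exp (2 * (max (a * b - c * (a + b - c)) 0 / (min c 1 * min (a + b - c) 1)))
    with hK
  refine ⟨K, Real.exp_pos _, fun s hs0 hs1 => ?_⟩
  have hterm : ∀ n : ℕ, (0:ℝ) ≤ ((∏ i ∈ Finset.range n, (a + i)) * (∏ i ∈ Finset.range n, (b + i)) /
      ((∏ i ∈ Finset.range n, (c + i)) * n.factorial)) * s ^ n := by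
    intro n
    have h1 : 0 < ∏ i ∈ Finset.range n, (a + (i:ℝ)) := Finset.prod_pos (fun i _ => by positivity)
    have h2 : 0 < ∏ i ∈ Finset.range n, (b + (i:ℝ)) := Finset.prod_pos (fun i _ => by positivity)
    have h3 : 0 < ∏ i ∈ Finset.range n, (c + (i:ℝ)) := Finset.prod_pos (fun i _ => by positivity)
    positivity
  have hpartial : ∀ N : ℕ,
      ∑ n ∈ Finset.range N, ((∏ i ∈ Finset.range n, (a + i)) * (∏ i ∈ Finset.range n, (b + i)) /
        ((∏ i ∈ Finset.range n, (c + i)) * n.factorial)) * s ^ n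
      ≤ K * (1 - s) ^ (-(a + b - c)) := by
    intro N
    have h1 : ∑ n ∈ Finset.range N, ((∏ i ∈ Finset.range n, (a + i)) * (∏ i ∈ Finset.range n, (b + i)) /
        ((∏ i ∈ Finset.range n, (c + i)) * n.factorial)) * s ^ n
        ≤ ∑ n ∈ Finset.range N,
            K * ((∏ i ∈ Finset.range n, ((a + b - c) + i)) / (n.factorial : ℝ) * s ^ n) := by
      refine Finset.sum_le_sum (fun n _ => ?_)
      have h3 : 0 < ∏ i ∈ Finset.range n, (c + (i:ℝ)) := Finset.prod_pos (fun i _ => by positivity)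
      have h4 : 0 < ∏ i ∈ Finset.range n, ((a + b - c) + (i:ℝ)) :=
        Finset.prod_pos (fun i _ => by positivity)
      have hfac : (0:ℝ) < n.factorial := by exact_mod_cast n.factorial_pos
      have hcc := st17_coef_compare a b c ha hb hc hm n
      have hdiv : (∏ i ∈ Finset.range n, (a + i)) * (∏ i ∈ Finset.range n, (b + i)) /
          ((∏ i ∈ Finset.range n, (c + i)) * n.factorial)
          ≤ K * ((∏ i ∈ Finset.range n, ((a + b - c) + i)) / (n.factorial : ℝ)) := by
        rw [div_le_iff₀ (by positivity)]
        calc (∏ i ∈ Finset.range n, (a + i)) * (∏ i ∈ Finset.range n, (b + i))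
            ≤ K * (∏ i ∈ Finset.range n, ((a + b - c) + i)) * (∏ i ∈ Finset.range n, (c + i)) :=
              hcc
          _ = K * ((∏ i ∈ Finset.range n, ((a + b - c) + i)) / (n.factorial : ℝ)) *
              ((∏ i ∈ Finset.range n, (c + i)) * n.factorial) := by
              field_simp
      have hsn : (0:ℝ) ≤ s ^ n := by positivity
      calc ((∏ i ∈ Finset.range n, (a + i)) * (∏ i ∈ Finset.range n, (b + i)) /
            ((∏ i ∈ Finset.range n, (c + i)) * n.factorial)) * s ^ n
          ≤ (K * ((∏ i ∈ Finset.range n, ((a + b - c) + i)) / (n.factorial : ℝ))) * s ^ n :=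
            mul_le_mul_of_nonneg_right hdiv hsn
        _ = K * ((∏ i ∈ Finset.range n, ((a + b - c) + i)) / (n.factorial : ℝ) * s ^ n) := by ring
    refine le_trans h1 ?_
    rw [← Finset.mul_sum]
    refine mul_le_mul_of_nonneg_left ?_ (Real.exp_pos _).le
    exact st17_poch_partial (a + b - c) hm s hs0 hs1 N
  unfold hyp2F1
  exact Real.tsum_le_of_sum_range_le hterm hpartial

open Real Set MeasureTheory Finset in
private lemma st17_hyp_nonneg (a b c : ℝ) (ha : 0 < a) (hb : 0 < b) (hc : 0 < c)
    (s : ℝ) (hs0 : 0 ≤ s) : 0 ≤ hyp2F1 a b c s := by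
  unfold hyp2F1
  refine tsum_nonneg (fun n => ?_)
  have h1 : 0 < ∏ i ∈ Finset.range n, (a + (i:ℝ)) := Finset.prod_pos (fun i _ => by positivity)
  have h2 : 0 < ∏ i ∈ Finset.range n, (b + (i:ℝ)) := Finset.prod_pos (fun i _ => by positivity)
  have h3 : 0 < ∏ i ∈ Finset.range n, (c + (i:ℝ)) := Finset.prod_pos (fun i _ => by positivity)
  positivity

end statement17aux

/-- Estimate (2.14): bound for Q^μ_ν with μ > 0. -/
theorem statement17 (μ ν : ℝ) (hμ : 0 < μ) (hν : -(3 / 2) < ν) (h : 0 < μ + ν + 1) :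
    ∃ C : ℝ, 0 < C ∧ ∀ t : ℝ, 1 < t →
      ‖legendreQ μ ν t‖ ≤ C * (t ^ 2 - 1) ^ (-(μ / 2)) * t ^ (-(ν - μ + 1)) := by
  obtain ⟨K, hKpos, hKb⟩ := st17_hyp_bound ((μ + ν) / 2 + 1) ((μ + ν + 1) / 2) (ν + 3 / 2)
    (by linarith) (by linarith) (by linarith) (by nlinarith)
  have habc : (μ + ν) / 2 + 1 + (μ + ν + 1) / 2 - (ν + 3 / 2) = μ := by ring
  have hΓ1 : 0 < Real.Gamma (μ + ν + 1) := Real.Gamma_pos_of_pos h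
  have hΓ2 : 0 < Real.Gamma (ν + 3 / 2) := Real.Gamma_pos_of_pos (by linarith)
  have hsqπ : (0:ℝ) < Real.sqrt Real.pi := Real.sqrt_pos.mpr Real.pi_pos
  have h2p : (0:ℝ) < (2:ℝ) ^ (ν + 1) := Real.rpow_pos_of_pos two_pos _
  refine ⟨Real.sqrt Real.pi * Real.Gamma (μ + ν + 1) * K /
    ((2:ℝ) ^ (ν + 1) * Real.Gamma (ν + 3 / 2)), by positivity, fun t ht => ?_⟩
  have ht0 : (0:ℝ) < t := by linarith
  have ht2 : (0:ℝ) < t ^ 2 - 1 := by nlinarith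
  have htp : (0:ℝ) < t ^ 2 := by positivity
  have htr : (0:ℝ) < t ^ (μ + ν + 1) := Real.rpow_pos_of_pos ht0 _
  have hs0 : (0:ℝ) ≤ 1 / t ^ 2 := by positivity
  have hs1 : 1 / t ^ 2 < 1 := by rw [div_lt_one htp]; nlinarith
  -- reduce the complex absolute value
  have habs : ‖legendreQ μ ν t‖ = |legendreQreal μ ν t| := by
    unfold legendreQ
    rw [norm_mul, Complex.norm_real, Complex.norm_exp]
    simp
  rw [habs]
  have hF0 : 0 ≤ hyp2F1 ((μ + ν) / 2 + 1) ((μ + ν + 1) / 2) (ν + 3 / 2) (1 / t ^ 2) :=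
    st17_hyp_nonneg _ _ _ (by linarith) (by linarith) (by linarith) _ hs0
  have hPnn : (0:ℝ) ≤ Real.sqrt Real.pi * Real.Gamma (μ + ν + 1) * (t ^ 2 - 1) ^ (μ / 2) /
      ((2:ℝ) ^ (ν + 1) * t ^ (μ + ν + 1) * Real.Gamma (ν + 3 / 2)) := by positivity
  have hQnn : 0 ≤ legendreQreal μ ν t := by
    unfold legendreQreal
    exact mul_nonneg hPnn hF0
  rw [abs_of_nonneg hQnn]
  have hFb := hKb (1 / t ^ 2) hs0 hs1
  rw [habc] at hFb
  -- algebraic identity for the bound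
  have e1 : (1 - 1 / t ^ 2 : ℝ) = (t ^ 2 - 1) / t ^ 2 := by field_simp
  have e2 : ((t ^ 2 - 1) / t ^ 2 : ℝ) ^ (-μ) = (t ^ 2 - 1) ^ (-μ) * (t ^ 2 : ℝ) ^ μ := by
    rw [Real.div_rpow ht2.le htp.le, Real.rpow_neg htp.le, div_eq_mul_inv, inv_inv]
  have e3 : ((t ^ 2 : ℝ)) ^ μ = t ^ (2 * μ) := by
    rw [show (t ^ 2 : ℝ) = t ^ ((2:ℕ):ℝ) by rw [Real.rpow_natCast],
      ← Real.rpow_mul ht0.le]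
    norm_num
  have p1 : (t ^ 2 - 1 : ℝ) ^ (μ / 2) * (t ^ 2 - 1) ^ (-μ) = (t ^ 2 - 1) ^ (-(μ / 2)) := by
    rw [← Real.rpow_add ht2]
    congr 1
    ring
  have p3 : t ^ (2 * μ) / t ^ (μ + ν + 1) = t ^ (-(ν - μ + 1)) := by
    rw [← Real.rpow_sub ht0]
    congr 1
    ring
  calc legendreQreal μ ν t
      ≤ (Real.sqrt Real.pi * Real.Gamma (μ + ν + 1) * (t ^ 2 - 1) ^ (μ / 2) /
          ((2:ℝ) ^ (ν + 1) * t ^ (μ + ν + 1) * Real.Gamma (ν + 3 / 2))) *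
        (K * (1 - 1 / t ^ 2) ^ (-μ)) := by
        unfold legendreQreal
        exact mul_le_mul_of_nonneg_left hFb hPnn
    _ = Real.sqrt Real.pi * Real.Gamma (μ + ν + 1) * K /
          ((2:ℝ) ^ (ν + 1) * Real.Gamma (ν + 3 / 2)) *
        ((t ^ 2 - 1) ^ (μ / 2) * (t ^ 2 - 1) ^ (-μ)) *
        (t ^ (2 * μ) / t ^ (μ + ν + 1)) := by
        rw [e1, e2, e3]
        field_simp
    _ = Real.sqrt Real.pi * Real.Gamma (μ + ν + 1) * K /
          ((2:ℝ) ^ (ν + 1) * Real.Gamma (ν + 3 / 2)) *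
        (t ^ 2 - 1) ^ (-(μ / 2)) * t ^ (-(ν - μ + 1)) := by
        rw [p1, p3]
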